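/- Let x and y be vectors in a real inner product space with equal norms, ‖x‖ = ‖y‖, and let a, b be real numbers with 0 ≤ a ≤ b. Then a ‖x − y‖ ≤ ‖a • x − b • y‖. -/

import Mathlib

/-- For vectors `x, y` of equal norm in a real inner product space and reals
`0 ≤ a ≤ b`, one has `a * ‖x - y‖ ≤ ‖a • x - b • y‖`. -/
theorem stmt7 {E : Type*} [NormedAddCommGroup E] [InnerProductSpace ℝ E]
    (x y : E) (h : ‖x‖ = ‖y‖) (a b : ℝ) (ha : 0 ≤ a) (hab : a ≤ b) :
    a * ‖x - y‖ ≤ ‖a • x - b • y‖ := by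
  have hsq : (a * ‖x - y‖)^2 ≤ ‖a • x - b • y‖^2 := by
    have h1 : ‖x - y‖^2 = ‖x‖^2 - 2 * inner ℝ x y + ‖y‖^2 := by
      rw [@norm_sub_sq_real]
    have h2 : ‖a • x - b • y‖^2 = (a*‖x‖)^2 - 2 * (a*b*inner ℝ x y) + (b*‖y‖)^2 := by
      rw [@norm_sub_sq_real, real_inner_smul_left, real_inner_smul_right,
        norm_smul, norm_smul, Real.norm_eq_abs, Real.norm_eq_abs,
        abs_of_nonneg ha, abs_of_nonneg (ha.trans hab)]
      ring
    have h3 : inner ℝ x y ≤ ‖x‖ * ‖y‖ := real_inner_le_norm x y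
    have h4 : 2*a*(b-a) * inner ℝ x y ≤ 2*a*(b-a) * (‖y‖*‖y‖) := by
      have := mul_le_mul_of_nonneg_left h3 (by nlinarith : (0:ℝ) ≤ 2*a*(b-a))
      rw [h] at this; linarith
    rw [h] at h1 h2
    have h1' : (a * ‖x - y‖)^2 = a^2 * (‖y‖^2 - 2*inner ℝ x y + ‖y‖^2) := by
      rw [mul_pow, h1]
    rw [h1', h2]
    nlinarith [sq_nonneg ((b-a)*‖y‖)]
  have h0 : 0 ≤ a * ‖x - y‖ := mul_nonneg ha (norm_nonneg _)
  nlinarith [norm_nonneg (a • x - b • y)]
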